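/- For every n ≥ 1, the number of planar binary trees with n leaves whose internal nodes are labeled by elements of the two-element set {≺, ≻}, subject to the restriction that the only allowed left-growth pattern is (≻, ≺) — i.e., whenever the left child w of an internal node v is itself an internal node, then v is labeled ≻ and w is labeled ≺ — equals the n-th Catalan number C_n = (1/(n+1))·binom(2n, n). (These labeled trees are the normal monomials for the Gröbner–Shirshov basis of the nonsymmetric dendriform operad with respect to the path-lexicographic order and the order of operations ≺ < ≻.) -/

import Mathlib

/-- Operation labels `≺` (prec) and `≻` (succ). -/
inductive DendOp where
  | prec
  | succ
deriving DecidableEq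

/-- Planar (full) binary trees with internal nodes labeled by `L` and unlabeled leaves. -/
inductive PBTree (L : Type) where
  | leaf : PBTree L
  | node : L → PBTree L → PBTree L → PBTree L

/-- Number of leaves of a planar binary tree. -/
def PBTree.leaves {L : Type} : PBTree L → ℕ
  | .leaf => 1
  | .node _ l r => l.leaves + r.leaves

/-- Normality: the only allowed left-growth pattern is `(≻, ≺)`, i.e. whenever the left
child of an internal node is itself internal, the node is labeled `≻` and its left
child is labeled `≺`. -/
def PBTree.normalDend : PBTree DendOp → Prop
  | .leaf => True
  | .node _ .leaf r => r.normalDend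
  | .node op (.node q a b) r =>
      op = DendOp.succ ∧ q = DendOp.prec ∧ (PBTree.node q a b).normalDend ∧ r.normalDend

deriving instance DecidableEq for PBTree

theorem PBTree.leaves_pos {L : Type} (t : PBTree L) : 1 ≤ t.leaves := by
  induction t with
  | leaf => simp [PBTree.leaves]
  | node op l r ihl ihr => simp [PBTree.leaves]; omega

def F : ℕ → Finset (PBTree DendOp)
  | 0 => ∅
  | 1 => {.leaf}
  | (n+2) =>
    (F (n+1)).image (fun r => .node .prec .leaf r) ∪
    (F (n+1)).image (fun r => .node .succ .leaf r) ∪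
    (Finset.Icc 1 n).attach.biUnion (fun j =>
      ((F j.1) ×ˢ (F (n+1-j.1))).image
        (fun p => .node .succ (.node .prec .leaf p.1) p.2))
  decreasing_by all_goals ((try (have h := j.2; rw [Finset.mem_Icc] at h)); simp_wf; try omega)

theorem F_forward : ∀ n, ∀ t ∈ F n, t.leaves = n ∧ t.normalDend := by
  intro n
  induction n using Nat.strong_induction_on with
  | _ n ih =>
    match n with
    | 0 => simp [F]
    | 1 =>
      intro t ht
      simp [F] at ht
      subst ht
      exact ⟨rfl, trivial⟩
    | (m+2) =>
      intro t ht
      rw [F] at ht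
      simp only [Finset.mem_union, Finset.mem_image, Finset.mem_biUnion, Finset.mem_attach,
        Finset.mem_product, true_and] at ht
      rcases ht with (⟨r, hr, rfl⟩ | ⟨r, hr, rfl⟩) | ⟨j, p, ⟨ha, hb⟩, rfl⟩
      · obtain ⟨h1, h2⟩ := ih (m+1) (by omega) r hr
        exact ⟨by simp [PBTree.leaves, h1]; omega, h2⟩
      · obtain ⟨h1, h2⟩ := ih (m+1) (by omega) r hr
        exact ⟨by simp [PBTree.leaves, h1]; omega, h2⟩
      · have hj := j.2
        rw [Finset.mem_Icc] at hj
        obtain ⟨h1, h2⟩ := ih j.1 (by omega) p.1 ha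
        obtain ⟨h3, h4⟩ := ih (m+1-j.1) (by omega) p.2 hb
        refine ⟨by simp [PBTree.leaves, h1, h3]; omega, ?_⟩
        exact ⟨rfl, rfl, h2, h4⟩

theorem F_backward : ∀ n, ∀ t : PBTree DendOp, t.leaves = n → t.normalDend → t ∈ F n := by
  intro n
  induction n using Nat.strong_induction_on with
  | _ n ih =>
    intro t hl hn
    match t with
    | .leaf =>
      simp [PBTree.leaves] at hl
      subst hl
      simp [F]
    | .node op .leaf r =>
      have hr : r.normalDend := hn
      have hr1 := r.leaves_pos
      simp [PBTree.leaves] at hl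
      obtain ⟨m, hm⟩ : ∃ m, n = m + 2 := ⟨n - 2, by omega⟩
      subst hm
      have hrm : r ∈ F (m+1) := ih (m+1) (by omega) r (by omega) hr
      rw [F]
      simp only [Finset.mem_union, Finset.mem_image]
      cases op with
      | prec => exact Or.inl (Or.inl ⟨r, hrm, rfl⟩)
      | succ => exact Or.inl (Or.inr ⟨r, hrm, rfl⟩)
    | .node op (.node q a b) r =>
      obtain ⟨hop, hq, hlft, hr⟩ := hn
      subst hop; subst hq
      match a with
      | .node q' a' b' => exact absurd hlft.1 (by simp)
      | .leaf =>
        have hb : b.normalDend := hlft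
        have hb1 := b.leaves_pos
        have hr1 := r.leaves_pos
        simp [PBTree.leaves] at hl
        obtain ⟨m, hm⟩ : ∃ m, n = m + 2 := ⟨n - 2, by omega⟩
        subst hm
        have hbm : b ∈ F b.leaves := ih b.leaves (by omega) b rfl hb
        have hrm : r ∈ F (m + 1 - b.leaves) := ih _ (by omega) r (by omega) hr
        rw [F]
        simp only [Finset.mem_union, Finset.mem_image, Finset.mem_biUnion, Finset.mem_attach,
          Finset.mem_product, true_and]
        refine Or.inr ⟨⟨b.leaves, ?_⟩, (b, r), ⟨hbm, hrm⟩, rfl⟩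
        rw [Finset.mem_Icc]; omega


theorem cat_rec (m : ℕ) : catalan (m+2) =
    catalan (m+1) + catalan (m+1) + ∑ j ∈ Finset.Icc 1 m, catalan j * catalan (m+1-j) := by
  have h0 : catalan (m+2) = ∑ i ∈ Finset.range (m+2), catalan i * catalan (m+1-i) := by
    rw [show m + 2 = (m+1)+1 from rfl, catalan_succ,
      ← Fin.sum_univ_eq_sum_range (fun i => catalan i * catalan (m+1-i)) (m+2)]
  rw [h0, Finset.sum_range_succ, Finset.sum_range_succ']
  simp only [catalan_zero, Nat.sub_zero, Nat.sub_self, mul_one, one_mul]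
  have h1 : ∑ j ∈ Finset.Icc 1 m, catalan j * catalan (m+1-j)
      = ∑ i ∈ Finset.range m, catalan (i+1) * catalan (m+1-(i+1)) := by
    rw [show Finset.Icc 1 m = Finset.Ico 1 (m+1) by rw [Finset.Ico_add_one_right_eq_Icc],
      Finset.sum_Ico_eq_sum_range]
    simp only [Nat.add_sub_cancel]
    refine Finset.sum_congr rfl fun i _ => by rw [add_comm 1 i]
  rw [h1]
  have h2 : ∀ i ∈ Finset.range m, catalan (i+1) * catalan (m+1-(i+1))
      = catalan (i+1) * catalan (m-i) := by
    intro i hi; rw [Finset.mem_range] at hi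
    congr 2
    omega
  rw [Finset.sum_congr rfl h2]
  omega

theorem F_card : ∀ n, 1 ≤ n → (F n).card = catalan n := by
  intro n
  induction n using Nat.strong_induction_on with
  | _ n ih =>
    intro hn
    match n, hn with
    | 1, _ => simp [F, catalan_one]
    | (m+2), _ =>
      rw [F]
      have hinj1 : Function.Injective (fun r => PBTree.node DendOp.prec .leaf r) := by
        intro x y h; simpa using h
      have hinj2 : Function.Injective (fun r => PBTree.node DendOp.succ .leaf r) := by
        intro x y h; simpa using h
      have hdisj1 : Disjoint ((F (m+1)).image (fun r => PBTree.node .prec .leaf r))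
          ((F (m+1)).image (fun r => PBTree.node .succ .leaf r)) := by
        rw [Finset.disjoint_left]
        rintro t ht1 ht2
        simp only [Finset.mem_image] at ht1 ht2
        obtain ⟨x, _, hx⟩ := ht1; obtain ⟨y, _, hy⟩ := ht2
        rw [← hy] at hx; simp at hx
      have hdisj2 : Disjoint
          ((F (m+1)).image (fun r => PBTree.node .prec .leaf r) ∪
           (F (m+1)).image (fun r => PBTree.node .succ .leaf r))
          ((Finset.Icc 1 m).attach.biUnion (fun j =>
            ((F j.1) ×ˢ (F (m+1-j.1))).image
              (fun p => PBTree.node .succ (.node .prec .leaf p.1) p.2))) := by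
        rw [Finset.disjoint_left]
        rintro t ht1 ht2
        simp only [Finset.mem_union, Finset.mem_image, Finset.mem_biUnion, Finset.mem_attach,
          Finset.mem_product, true_and] at ht1 ht2
        obtain ⟨j, p, _, hp⟩ := ht2
        rcases ht1 with ⟨x, _, hx⟩ | ⟨x, _, hx⟩ <;> rw [← hp] at hx <;> simp at hx
      rw [Finset.card_union_of_disjoint hdisj2, Finset.card_union_of_disjoint hdisj1,
        Finset.card_image_of_injective _ hinj1, Finset.card_image_of_injective _ hinj2]
      have hbi : ((Finset.Icc 1 m).attach.biUnion (fun j =>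
            ((F j.1) ×ˢ (F (m+1-j.1))).image
              (fun p => PBTree.node .succ (.node .prec .leaf p.1) p.2))).card
          = ∑ j ∈ (Finset.Icc 1 m).attach, (F j.1).card * (F (m+1-j.1)).card := by
        rw [Finset.card_biUnion]
        · refine Finset.sum_congr rfl fun j _ => ?_
          rw [Finset.card_image_of_injective, Finset.card_product]
          intro p q h
          simp only [PBTree.node.injEq] at h
          exact Prod.ext h.2.1.2.2 h.2.2
        · intro j _ j' _ hjj'
          rw [Function.onFun, Finset.disjoint_left]
          rintro t ht1 ht2
          simp only [Finset.mem_image, Finset.mem_product] at ht1 ht2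
          obtain ⟨p, ⟨hp1, _⟩, hp⟩ := ht1
          obtain ⟨q, ⟨hq1, _⟩, hq⟩ := ht2
          rw [← hq] at hp
          simp only [PBTree.node.injEq] at hp
          have e1 := (F_forward _ _ hp1).1
          have e2 := (F_forward _ _ hq1).1
          rw [hp.2.1.2.2] at e1
          exact hjj' (Subtype.ext (e1.symm.trans e2))
      rw [hbi]
      have hcm : (F (m+1)).card = catalan (m+1) := ih (m+1) (by omega) (by omega)
      have hsum : ∑ j ∈ (Finset.Icc 1 m).attach, (F j.1).card * (F (m+1-j.1)).card
          = ∑ j ∈ Finset.Icc 1 m, catalan j * catalan (m+1-j) := by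
        rw [Finset.sum_attach (Finset.Icc 1 m) (fun j => (F j).card * (F (m+1-j)).card)]
        refine Finset.sum_congr rfl fun j hj => ?_
        rw [Finset.mem_Icc] at hj
        rw [ih j (by omega) (by omega), ih (m+1-j) (by omega) (by omega)]
      rw [hcm, hsum]
      exact (cat_rec m).symm

/-- the number of `{≺,≻}`-labeled planar binary trees with `n` leaves whose
only left-growth pattern is `(≻,≺)` equals the `n`-th Catalan number
`C n = binom(2n, n)/(n+1)`. -/
theorem count_normal_dendriform_trees (n : ℕ) (hn : 1 ≤ n) :
    {t : PBTree DendOp | t.leaves = n ∧ t.normalDend}.ncard =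
      (2 * n).choose n / (n + 1) := by
  have hset : {t : PBTree DendOp | t.leaves = n ∧ t.normalDend} = ↑(F n) := by
    ext t
    simp only [Set.mem_setOf_eq, Finset.coe_sort_coe, Finset.mem_coe]
    constructor
    · rintro ⟨h1, h2⟩; exact F_backward n t h1 h2
    · intro h; exact F_forward n t h
  rw [hset, Set.ncard_coe_finset, F_card n hn, catalan_eq_centralBinom_div,
    Nat.centralBinom]
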